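/- arXiv:1606.03650 — 10 statements merged into one kernel-verified Lean document; each statement's English description precedes it below -/
import Mathlib

section
/- Assume δ > 0, 1 < τ̲ ≤ τ̄ < ∞, ‖f† − f^δ‖_H ≤ δ, and let φ ∈ V satisfy the lower discrepancy bound τ̲·δ ≤ ‖Tφ − f^δ‖_H. If Ψ is a concave index function, then Ψ(δ) ≤ (τ̄/(τ̲ − 1))·Ψ(‖Tφ − Tφ†‖_H). -/
open Set

lemma concave_scale {Ψ : ℝ → ℝ} (hΨ0 : Ψ 0 = 0)
    (hΨconc : ConcaveOn ℝ (Ici (0 : ℝ)) Ψ) {c t : ℝ} (hc : 1 ≤ c) (ht : 0 ≤ t) :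
    Ψ (c * t) ≤ c * Ψ t := by
  have hc0 : 0 < c := lt_of_lt_of_le one_pos hc
  have h1 : (0:ℝ) ≤ 1 / c := by positivity
  have h2 : (0:ℝ) ≤ 1 - 1 / c := by
    have : 1 / c ≤ 1 := by rw [div_le_one hc0]; exact hc
    linarith
  have hct : c * t ∈ Ici (0:ℝ) := mem_Ici.2 (by positivity)
  have h0 : (0:ℝ) ∈ Ici (0:ℝ) := mem_Ici.2 le_rfl
  have := hΨconc.2 hct h0 h1 h2 (by ring)
  simp only [smul_eq_mul, mul_zero, add_zero, hΨ0] at this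
  have heq : 1 / c * (c * t) = t := by field_simp
  rw [heq] at this
  calc Ψ (c * t) = c * (1 / c * Ψ (c * t)) := by field_simp
    _ ≤ c * Ψ t := by nlinarith

/-- If `δ > 0`, `1 < τ̲ ≤ τ̄`, the data satisfies `‖f† − f^δ‖ ≤ δ`, and `φ` satisfies the
lower discrepancy bound `τ̲·δ ≤ ‖Tφ − f^δ‖`, then every concave index function `Ψ`
(continuous, monotone increasing, `Ψ 0 = 0`, nonnegative on `[0,∞)`) satisfies
`Ψ δ ≤ (τ̄/(τ̲ − 1)) * Ψ ‖Tφ − Tφ†‖`. -/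
theorem index_lower_discrepancy_bound
    {V H : Type*} [NormedAddCommGroup V] [NormedSpace ℝ V] [CompleteSpace V]
    [NormedAddCommGroup H] [InnerProductSpace ℝ H] [CompleteSpace H]
    (T : V →L[ℝ] H) (φdag φ : V) (fδ : H) (δ τl τu : ℝ)
    (hδ : 0 < δ) (hτl : 1 < τl) (hτlu : τl ≤ τu)
    (hnoise : ‖T φdag - fδ‖ ≤ δ)
    (hdisc : τl * δ ≤ ‖T φ - fδ‖)
    (Ψ : ℝ → ℝ)
    (hΨcont : ContinuousOn Ψ (Ici (0 : ℝ)))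
    (hΨmono : MonotoneOn Ψ (Ici (0 : ℝ)))
    (hΨ0 : Ψ 0 = 0)
    (hΨnonneg : ∀ t ∈ Ici (0 : ℝ), 0 ≤ Ψ t)
    (hΨconc : ConcaveOn ℝ (Ici (0 : ℝ)) Ψ) :
    Ψ δ ≤ (τu / (τl - 1)) * Ψ ‖T φ - T φdag‖ := by
  set e := ‖T φ - T φdag‖ with he
  have he0 : 0 ≤ e := norm_nonneg _
  have htri : ‖T φ - fδ‖ ≤ e + ‖T φdag - fδ‖ := by
    calc ‖T φ - fδ‖ = ‖(T φ - T φdag) + (T φdag - fδ)‖ := by congr 1; abel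
      _ ≤ e + ‖T φdag - fδ‖ := norm_add_le _ _
  have hkey : (τl - 1) * δ ≤ e := by nlinarith
  set c : ℝ := max 1 (1 / (τl - 1)) with hc
  have hc1 : 1 ≤ c := le_max_left _ _
  have hτl1 : 0 < τl - 1 := by linarith
  have hδce : δ ≤ c * e := by
    have h1 : δ ≤ (1 / (τl - 1)) * e := by
      rw [div_mul_eq_mul_div, le_div_iff₀ hτl1]; nlinarith
    calc δ ≤ (1 / (τl - 1)) * e := h1
      _ ≤ c * e := mul_le_mul_of_nonneg_right (le_max_right _ _) he0
  have h2 : Ψ δ ≤ Ψ (c * e) := hΨmono (mem_Ici.2 hδ.le) (mem_Ici.2 (by positivity)) hδce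
  have h3 : Ψ (c * e) ≤ c * Ψ e := concave_scale hΨ0 hΨconc hc1 he0
  have h4 : c ≤ τu / (τl - 1) := by
    apply max_le
    · rw [le_div_iff₀ hτl1]; linarith
    · gcongr
      linarith
  have hΨe : 0 ≤ Ψ e := hΨnonneg e he0
  calc Ψ δ ≤ Ψ (c * e) := h2
    _ ≤ c * Ψ e := h3
    _ ≤ (τu / (τl - 1)) * Ψ e := mul_le_mul_of_nonneg_right h4 hΨe
end

section
/- (Verification of the variational source condition.) Assume δ > 0, 1 < τ̲ ≤ τ̄ < ∞, ‖f† − f^δ‖_H ≤ δ, and that φ_α^δ satisfies the lower discrepancy bound τ̲·δ ≤ ‖Tφ_α^δ − f^δ‖_H. Let Ψ be a concave index function, let p be a subgradient of J at φ†, and suppose there is a constant C ≥ 0 with ⟨p, φ† − φ_α^δ⟩ ≤ C·Ψ(δ). Then the variational inequality D_J(φ_α^δ, φ†) ≤ J(φ_α^δ) − J(φ†) + C·(τ̄/(τ̲ − 1))·Ψ(‖Tφ_α^δ − Tφ†‖_H) holds, where D_J(φ_α^δ, φ†) := J(φ_α^δ) − J(φ†) − ⟨p, φ_α^δ − φ†⟩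 is the Bregman distance taken with the subgradient p. -/
open Set

/-- Verification of the variational source condition (Theorem 3.1 of the paper):
under Morozov's lower discrepancy bound and the coefficient condition
`⟨p, φ† − φ_α^δ⟩ ≤ C·Ψ(δ)` for a subgradient `p` of the convex functional `J` at `φ†`,
the Bregman distance `D_J(φ_α^δ, φ†)` (taken with subgradient `p`) satisfies the
variational inequality. -/
theorem VSC_verification
    {V H : Type*} [NormedAddCommGroup V] [NormedSpace ℝ V] [CompleteSpace V]
    [NormedAddCommGroup H] [InnerProductSpace ℝ H] [CompleteSpace H]
    (T : V →L[ℝ] H) (J : V → ℝ) (hJ : ConvexOn ℝ Set.univ J)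
    (φdag φα : V) (fδ : H) (δ τl τu : ℝ)
    (hδ : 0 < δ) (hτl : 1 < τl) (hτlu : τl ≤ τu)
    (hnoise : ‖T φdag - fδ‖ ≤ δ)
    (hdisc : τl * δ ≤ ‖T φα - fδ‖)
    (Ψ : ℝ → ℝ)
    (hΨcont : ContinuousOn Ψ (Ici (0 : ℝ)))
    (hΨmono : MonotoneOn Ψ (Ici (0 : ℝ)))
    (hΨ0 : Ψ 0 = 0)
    (hΨnonneg : ∀ t ∈ Ici (0 : ℝ), 0 ≤ Ψ t)
    (hΨconc : ConcaveOn ℝ (Ici (0 : ℝ)) Ψ)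
    (p : V →L[ℝ] ℝ)
    (hp : ∀ v : V, p (v - φdag) ≤ J v - J φdag)
    (C : ℝ) (hC : 0 ≤ C)
    (hcoeff : p (φdag - φα) ≤ C * Ψ δ) :
    J φα - J φdag - p (φα - φdag) ≤
      J φα - J φdag + C * (τu / (τl - 1)) * Ψ ‖T φα - T φdag‖ := by
  have hτ1 : 0 < τl - 1 := by linarith
  set s := ‖T φα - T φdag‖ with hs
  have hs0 : 0 ≤ s := norm_nonneg _
  set k := τu / (τl - 1) with hkdef
  have hk1 : (1:ℝ) ≤ k := by rw [hkdef, le_div_iff₀ hτ1]; linarith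
  have hk0 : 0 < k := lt_of_lt_of_le one_pos hk1
  have htri : ‖T φα - fδ‖ ≤ s + δ := by
    calc ‖T φα - fδ‖ = ‖(T φα - T φdag) + (T φdag - fδ)‖ := by abel_nf
      _ ≤ s + ‖T φdag - fδ‖ := norm_add_le _ _
      _ ≤ s + δ := by linarith
  have hδs : (τl - 1) * δ ≤ s := by nlinarith
  have hδks : δ ≤ k * s := by
    rw [hkdef, div_mul_eq_mul_div, le_div_iff₀ hτ1]; nlinarith
  have h1 : Ψ δ ≤ Ψ (k * s) := hΨmono (mem_Ici.mpr hδ.le) (mem_Ici.mpr (by positivity)) hδks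
  have h2 : Ψ (k * s) ≤ k * Ψ s := by
    have hx : k * s ∈ Ici (0:ℝ) := mem_Ici.mpr (by positivity)
    have hy : (0:ℝ) ∈ Ici (0:ℝ) := mem_Ici.mpr le_rfl
    have ha : (0:ℝ) ≤ 1/k := by positivity
    have hb : (0:ℝ) ≤ 1 - 1/k := by
      rw [sub_nonneg]; exact div_le_one_of_le₀ hk1 hk0.le
    have hab : (1/k) + (1 - 1/k) = 1 := by ring
    have hc := hΨconc.2 hx hy ha hb hab
    have hx : (1/k) • (k * s) + (1 - 1/k) • (0:ℝ) = s := by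
      rw [smul_eq_mul, smul_eq_mul, mul_zero, add_zero, ← mul_assoc, one_div_mul_cancel hk0.ne', one_mul]
    rw [hx, smul_eq_mul, smul_eq_mul, hΨ0, mul_zero, add_zero] at hc
    calc Ψ (k * s) = k * ((1/k) * Ψ (k * s)) := by field_simp
      _ ≤ k * Ψ s := by
          apply mul_le_mul_of_nonneg_left hc hk0.le
  have h3 : p (φdag - φα) = - p (φα - φdag) := by
    rw [show φdag - φα = -(φα - φdag) by abel, map_neg]
  have h4 : C * Ψ δ ≤ C * (k * Ψ s) := by
    apply mul_le_mul_of_nonneg_left (le_trans h1 h2) hC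
  rw [h3] at hcoeff
  nlinarith
end

section
/- Suppose the variational source condition holds with coefficient σ ∈ (0,1], concave index function Ψ and a subgradient p† of J at φ†: (σ/2)·(J(φ) − J(φ†) − ⟨p†, φ − φ†⟩) ≤ J(φ) − J(φ†) + Ψ(‖Tφ − Tφ†‖_H) for all φ ∈ V. Let α > 0, let φ_α^δ minimize F_α over V, and assume ‖f† − f^δ‖_H ≤ δ. Then (σ/(4α))·‖Tφ_α^δ − f^δ‖_H² − (σ/4)·(δ²/α) ≤ Ψ(‖Tφ_α^δ − Tφ†‖_H). -/
open Set

/-- Under the variational source condition with coefficient `σ ∈ (0,1]`, concave index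
function `Ψ` and subgradient `p†` of `J` at `φ†`, if `φ_α^δ` minimizes the Tikhonov functional
`F_α(φ) = (1/2)‖Tφ − f^δ‖² + α·J(φ)` and `‖f† − f^δ‖ ≤ δ`, then
`(σ/(4α))·‖Tφ_α^δ − f^δ‖² − (σ/4)·(δ²/α) ≤ Ψ(‖Tφ_α^δ − Tφ†‖)`. -/
theorem index_lower_bound_of_minimizer
    {V H : Type*} [NormedAddCommGroup V] [NormedSpace ℝ V] [CompleteSpace V]
    [NormedAddCommGroup H] [InnerProductSpace ℝ H] [CompleteSpace H]
    (T : V →L[ℝ] H) (J : V → ℝ) (hJ : ConvexOn ℝ Set.univ J)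
    (φdag φα : V) (fδ : H) (δ σ α : ℝ)
    (hδ : 0 < δ) (hσ0 : 0 < σ) (hσ1 : σ ≤ 1) (hα : 0 < α)
    (hnoise : ‖T φdag - fδ‖ ≤ δ)
    (Ψ : ℝ → ℝ)
    (hΨcont : ContinuousOn Ψ (Ici (0 : ℝ)))
    (hΨmono : MonotoneOn Ψ (Ici (0 : ℝ)))
    (hΨ0 : Ψ 0 = 0)
    (hΨnonneg : ∀ t ∈ Ici (0 : ℝ), 0 ≤ Ψ t)
    (hΨconc : ConcaveOn ℝ (Ici (0 : ℝ)) Ψ)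
    (pdag : V →L[ℝ] ℝ)
    (hpdag : ∀ v : V, pdag (v - φdag) ≤ J v - J φdag)
    (hVSC : ∀ φ : V, (σ / 2) * (J φ - J φdag - pdag (φ - φdag)) ≤
      J φ - J φdag + Ψ ‖T φ - T φdag‖)
    (hmin : ∀ φ : V, (1 / 2) * ‖T φα - fδ‖ ^ 2 + α * J φα ≤
      (1 / 2) * ‖T φ - fδ‖ ^ 2 + α * J φ) :
    (σ / (4 * α)) * ‖T φα - fδ‖ ^ 2 - (σ / 4) * (δ ^ 2 / α) ≤
      Ψ ‖T φα - T φdag‖ := by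
  have hnn : 0 ≤ Ψ ‖T φα - T φdag‖ := hΨnonneg _ (norm_nonneg _)
  have hB : pdag (φα - φdag) ≤ J φα - J φdag := hpdag φα
  have hvsc := hVSC φα
  have hm := hmin φdag
  have hδ2 : ‖T φdag - fδ‖ ^ 2 ≤ δ ^ 2 := pow_le_pow_left₀ (norm_nonneg _) hnoise 2
  have hA : α * (J φα - J φdag) ≤ (δ ^ 2 - ‖T φα - fδ‖ ^ 2) / 2 := by nlinarith
  have key : (σ / (4 * α)) * ‖T φα - fδ‖ ^ 2 - (σ / 4) * (δ ^ 2 / α)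
      = σ * (‖T φα - fδ‖ ^ 2 - δ ^ 2) / (4 * α) := by
    field_simp
  rw [key]
  rcases le_or_gt (‖T φα - fδ‖ ^ 2) (δ ^ 2) with h | h
  · have : σ * (‖T φα - fδ‖ ^ 2 - δ ^ 2) / (4 * α) ≤ 0 := by
      apply div_nonpos_of_nonpos_of_nonneg
      · nlinarith
      · linarith
    linarith
  · rw [div_le_iff₀ (by linarith : (0:ℝ) < 4 * α)]
    nlinarith [mul_nonneg (by linarith : (0:ℝ) ≤ σ/2) (by linarith : (0:ℝ) ≤ J φα - J φdag - pdag (φα - φdag)), mul_nonneg hα.le hnn]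
end

section
/- (New lower bound for the regularization parameter.) Assume δ > 0, 1 < τ̲ ≤ τ̄ < ∞, ‖f† − f^δ‖_H ≤ δ, the variational source condition holds with coefficient σ ∈ (0,1], concave index function Ψ and a subgradient p† of J at φ†, and φ_α^δ minimizes F_α over V with α > 0 chosen so that Morozov's discrepancy principle τ̲·δ ≤ ‖Tφ_α^δ − f^δ‖_H ≤ τ̄·δ holds. Then (σ/4)·((τ̲² − 1)/(τ̄ + 1))·δ² ≤ α·Ψ(δ). (When τ̄ = τ̲ this is the paper's bound (σ/4)(τ̲ − 1)δ² ≤ α·Ψ(δ).) -/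
open Set

set_option maxHeartbeats 1000000 in
/-- New lower bound for the regularization parameter (Theorem 4.1 of the paper):
under the VSC and Morozov's discrepancy principle
`τ̲·δ ≤ ‖Tφ_α^δ − f^δ‖ ≤ τ̄·δ`, one has `(σ/4)·((τ̲² − 1)/(τ̄ + 1))·δ² ≤ α·Ψ(δ)`. -/
theorem new_lower_bound_regularization_parameter
    {V H : Type*} [NormedAddCommGroup V] [NormedSpace ℝ V] [CompleteSpace V]
    [NormedAddCommGroup H] [InnerProductSpace ℝ H] [CompleteSpace H]
    (T : V →L[ℝ] H) (J : V → ℝ) (hJ : ConvexOn ℝ Set.univ J)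
    (φdag φα : V) (fδ : H) (δ σ α τl τu : ℝ)
    (hδ : 0 < δ) (hσ0 : 0 < σ) (hσ1 : σ ≤ 1) (hα : 0 < α)
    (hτl : 1 < τl) (hτlu : τl ≤ τu)
    (hnoise : ‖T φdag - fδ‖ ≤ δ)
    (Ψ : ℝ → ℝ)
    (hΨcont : ContinuousOn Ψ (Ici (0 : ℝ)))
    (hΨmono : MonotoneOn Ψ (Ici (0 : ℝ)))
    (hΨ0 : Ψ 0 = 0)
    (hΨnonneg : ∀ t ∈ Ici (0 : ℝ), 0 ≤ Ψ t)
    (hΨconc : ConcaveOn ℝ (Ici (0 : ℝ)) Ψ)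
    (pdag : V →L[ℝ] ℝ)
    (hpdag : ∀ v : V, pdag (v - φdag) ≤ J v - J φdag)
    (hVSC : ∀ φ : V, (σ / 2) * (J φ - J φdag - pdag (φ - φdag)) ≤
      J φ - J φdag + Ψ ‖T φ - T φdag‖)
    (hmin : ∀ φ : V, (1 / 2) * ‖T φα - fδ‖ ^ 2 + α * J φα ≤
      (1 / 2) * ‖T φ - fδ‖ ^ 2 + α * J φ)
    (hdisc_low : τl * δ ≤ ‖T φα - fδ‖)
    (hdisc_up : ‖T φα - fδ‖ ≤ τu * δ) :
    (σ / 4) * ((τl ^ 2 - 1) / (τu + 1)) * δ ^ 2 ≤ α * Ψ δ := by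
  have hn := hmin φdag
  have hτu0 : (0:ℝ) < τu + 1 := by linarith
  have hsq : ‖T φdag - fδ‖ ^ 2 ≤ δ ^ 2 := by
    have := norm_nonneg (T φdag - fδ); nlinarith
  have hnsq : τl ^ 2 * δ ^ 2 ≤ ‖T φα - fδ‖ ^ 2 := by
    have h1 : (0:ℝ) ≤ τl * δ := by positivity
    nlinarith
  have hkey : (1 / 2) * (τl ^ 2 - 1) * δ ^ 2 ≤ α * (J φdag - J φα) := by
    nlinarith
  have hDp : 0 ≤ J φα - J φdag - pdag (φα - φdag) := by
    have := hpdag φα; linarith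
  have hVSCα := hVSC φα
  have hΨlow : J φdag - J φα ≤ Ψ ‖T φα - T φdag‖ := by nlinarith
  have hnorm : ‖T φα - T φdag‖ ≤ (τu + 1) * δ := by
    calc ‖T φα - T φdag‖ ≤ ‖T φα - fδ‖ + ‖fδ - T φdag‖ :=
          norm_sub_le_norm_sub_add_norm_sub _ _ _
    _ ≤ τu * δ + δ := by rw [norm_sub_rev fδ (T φdag)]; exact add_le_add hdisc_up hnoise
    _ = (τu + 1) * δ := by ring
  have hmem1 : ‖T φα - T φdag‖ ∈ Ici (0:ℝ) := norm_nonneg _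
  have hmem2 : (τu + 1) * δ ∈ Ici (0:ℝ) := by simp only [mem_Ici]; positivity
  have hΨ1 : Ψ ‖T φα - T φdag‖ ≤ Ψ ((τu + 1) * δ) := hΨmono hmem1 hmem2 hnorm
  have hΨ2 : Ψ ((τu + 1) * δ) ≤ (τu + 1) * Ψ δ := by
    have hlam : (0:ℝ) ≤ 1 / (τu + 1) := by positivity
    have hlam' : (0:ℝ) ≤ 1 - 1 / (τu + 1) := by
      rw [sub_nonneg, div_le_one hτu0]; linarith
    have hc := hΨconc.2 hmem2 (self_mem_Ici (a := (0:ℝ))) hlam hlam' (by ring)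
    simp only [smul_eq_mul, smul_zero, add_zero, mul_zero, hΨ0] at hc
    have heq : (1 / (τu + 1)) * ((τu + 1) * δ) = δ := by field_simp
    rw [heq] at hc
    have := mul_le_mul_of_nonneg_left hc (le_of_lt hτu0)
    calc Ψ ((τu + 1) * δ) = (τu + 1) * ((1 / (τu + 1)) * Ψ ((τu + 1) * δ)) := by
          field_simp
    _ ≤ (τu + 1) * Ψ δ := this
  have hΨδ : 0 ≤ Ψ δ := hΨnonneg δ (le_of_lt hδ)
  have hchain : (1 / 2) * (τl ^ 2 - 1) * δ ^ 2 ≤ α * ((τu + 1) * Ψ δ) := by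
    have h1 : J φdag - J φα ≤ (τu + 1) * Ψ δ := by linarith
    nlinarith
  set D := (τl ^ 2 - 1) / (τu + 1) with hD_def
  have hD : D * (τu + 1) = τl ^ 2 - 1 := div_mul_cancel₀ _ (ne_of_gt hτu0)
  have hDpos : 0 < D := div_pos (by nlinarith) hτu0
  have h2 : (1 / 2) * D * δ ^ 2 ≤ α * Ψ δ := by
    rw [← mul_le_mul_iff_of_pos_right hτu0]
    calc (1 / 2) * D * δ ^ 2 * (τu + 1) = (1 / 2) * (D * (τu + 1)) * δ ^ 2 := by ring
    _ = (1 / 2) * (τl ^ 2 - 1) * δ ^ 2 := by rw [hD]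
    _ ≤ α * ((τu + 1) * Ψ δ) := hchain
    _ = α * Ψ δ * (τu + 1) := by ring
  have hDd : 0 ≤ D * δ ^ 2 := by positivity
  have h3 : (σ / 4) * D * δ ^ 2 ≤ (1 / 2) * D * δ ^ 2 := by nlinarith
  linarith
end

section
/- (Maximal regularization parameter.) Assume J ≥ 0 on V, δ > 0, σ ∈ (0,1], τ̲ > 1, ‖f† − f^δ‖_H ≤ δ, φ_α^δ minimizes F_α over V for some α > 0, Ψ(δ) > 0, and the lower bound (σ/4)·(τ̲ − 1)·δ² ≤ α·Ψ(δ) holds. Define α_max := ( (8/(σ·(τ̲ − 1)))·Ψ(δ) + J(φ†) )⁻¹. If α ≤ α_max, then F_{α_max}(φ_α^δ) ≤ α_max·( 2·δ²/α + J(φ†) ) ≤ 1; in particular the value of the Tikhonov functional with parameter α_max at φ_α^δ is finite and at most 1. -/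
open Set

/-- Maximal regularization parameter (Theorem 4.2 of the paper): with
`α_max := ((8/(σ·(τ̲ − 1)))·Ψ(δ) + J(φ†))⁻¹`, if `α ≤ α_max` then the Tikhonov functional
with parameter `α_max` evaluated at `φ_α^δ` is bounded by `α_max·(2δ²/α + J(φ†)) ≤ 1`. -/
theorem maximal_regularization_parameter
    {V H : Type*} [NormedAddCommGroup V] [NormedSpace ℝ V] [CompleteSpace V]
    [NormedAddCommGroup H] [InnerProductSpace ℝ H] [CompleteSpace H]
    (T : V →L[ℝ] H) (J : V → ℝ) (hJ : ConvexOn ℝ Set.univ J)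
    (hJnonneg : ∀ φ : V, 0 ≤ J φ)
    (φdag φα : V) (fδ : H) (δ σ α τl : ℝ)
    (hδ : 0 < δ) (hσ0 : 0 < σ) (hσ1 : σ ≤ 1) (hα : 0 < α) (hτl : 1 < τl)
    (hnoise : ‖T φdag - fδ‖ ≤ δ)
    (Ψ : ℝ → ℝ)
    (hΨcont : ContinuousOn Ψ (Ici (0 : ℝ)))
    (hΨmono : MonotoneOn Ψ (Ici (0 : ℝ)))
    (hΨ0 : Ψ 0 = 0)
    (hΨnonneg : ∀ t ∈ Ici (0 : ℝ), 0 ≤ Ψ t)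
    (hΨδpos : 0 < Ψ δ)
    (hmin : ∀ φ : V, (1 / 2) * ‖T φα - fδ‖ ^ 2 + α * J φα ≤
      (1 / 2) * ‖T φ - fδ‖ ^ 2 + α * J φ)
    (hlow : (σ / 4) * (τl - 1) * δ ^ 2 ≤ α * Ψ δ)
    (hαmax : α ≤ ((8 / (σ * (τl - 1))) * Ψ δ + J φdag)⁻¹) :
    (1 / 2) * ‖T φα - fδ‖ ^ 2 +
        ((8 / (σ * (τl - 1))) * Ψ δ + J φdag)⁻¹ * J φα ≤
      ((8 / (σ * (τl - 1))) * Ψ δ + J φdag)⁻¹ * (2 * δ ^ 2 / α + J φdag) ∧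
    ((8 / (σ * (τl - 1))) * Ψ δ + J φdag)⁻¹ * (2 * δ ^ 2 / α + J φdag) ≤ 1 := by
  have hc : 0 < σ * (τl - 1) := mul_pos hσ0 (by linarith)
  set A : ℝ := (8 / (σ * (τl - 1))) * Ψ δ + J φdag with hA
  have hA0 : 0 < A := by
    have h1 : 0 < (8 / (σ * (τl - 1))) * Ψ δ := mul_pos (div_pos (by norm_num) hc) hΨδpos
    have := hJnonneg φdag
    rw [hA]; linarith
  have hAinv : 0 < A⁻¹ := inv_pos.mpr hA0
  have hmin' := hmin φdag
  have hnorm1 : 0 ≤ ‖T φα - fδ‖ ^ 2 := by positivity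
  have hnorm2 : ‖T φdag - fδ‖ ^ 2 ≤ δ ^ 2 := by
    have := norm_nonneg (T φdag - fδ)
    nlinarith
  have hJα := hJnonneg φα
  have hJd := hJnonneg φdag
  -- r := A⁻¹ / α ≥ 1
  have hr1 : α * 1 ≤ α * (A⁻¹ / α) := by
    rw [mul_div_cancel₀ _ (ne_of_gt hα)]; linarith [hαmax]
  have hr : (1:ℝ) ≤ A⁻¹ / α := le_of_mul_le_mul_left hr1 hα
  have hAeq : A⁻¹ = (A⁻¹ / α) * α := (div_mul_cancel₀ _ (ne_of_gt hα)).symm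
  constructor
  · have key : (1 / 2) * ‖T φα - fδ‖ ^ 2 + A⁻¹ * J φα ≤
        (A⁻¹ / α) * ((1 / 2) * ‖T φα - fδ‖ ^ 2 + α * J φα) := by
      nlinarith [hr, hnorm1]
    have key2 : (A⁻¹ / α) * ((1 / 2) * ‖T φα - fδ‖ ^ 2 + α * J φα) ≤
        (A⁻¹ / α) * ((1 / 2) * δ ^ 2 + α * J φdag) := by
      apply mul_le_mul_of_nonneg_left _ (by positivity)
      linarith
    have key3 : (A⁻¹ / α) * ((1 / 2) * δ ^ 2 + α * J φdag) ≤ A⁻¹ * (2 * δ ^ 2 / α + J φdag) := by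
      have e1 : (A⁻¹ / α) * ((1 / 2) * δ ^ 2 + α * J φdag)
          = A⁻¹ * (δ ^ 2 / α / 2) + A⁻¹ * J φdag := by
        field_simp
      have e2 : A⁻¹ * (2 * δ ^ 2 / α + J φdag) = A⁻¹ * (2 * (δ ^ 2 / α)) + A⁻¹ * J φdag := by
        ring_nf
      have h3 : A⁻¹ * (δ ^ 2 / α / 2) ≤ A⁻¹ * (2 * (δ ^ 2 / α)) := by
        apply mul_le_mul_of_nonneg_left _ (le_of_lt hAinv)
        have : 0 ≤ δ ^ 2 / α := by positivity
        linarith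
      rw [e1, e2]; linarith
    linarith
  · rw [inv_mul_le_iff₀ hA0, mul_one]
    have h4 : 2 * δ ^ 2 / α ≤ (8 / (σ * (τl - 1))) * Ψ δ := by
      rw [div_le_iff₀ hα]
      have : (8 / (σ * (τl - 1))) * Ψ δ * α = (8 / (σ * (τl - 1))) * (α * Ψ δ) := by ring
      rw [this]
      have h5 : (8 / (σ * (τl - 1))) * ((σ / 4) * (τl - 1) * δ ^ 2) ≤
          (8 / (σ * (τl - 1))) * (α * Ψ δ) :=
        mul_le_mul_of_nonneg_left hlow (le_of_lt (div_pos (by norm_num) hc))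
      have h6 : (8 / (σ * (τl - 1))) * ((σ / 4) * (τl - 1) * δ ^ 2) = 2 * δ ^ 2 := by
        rw [div_mul_eq_mul_div, div_eq_iff hc.ne']; ring
      linarith
    linarith
end

section
/- (Stability of the J-difference under the Hofmann–Mathé lower bound.) Assume δ > 0, τ̲ > 1, ‖f† − f^δ‖_H ≤ δ, Ψ is a concave index function, φ_α^δ minimizes F_α over V with α > 0, and the regularization parameter satisfies the lower bound (1/4)·((τ̲² − 1)/(τ̲² + 1))·δ² ≤ α·Ψ((τ̲ − 1)·δ). Then J(φ_α^δ) − J(φ†) ≤ 2·((τ̲² + 1)/(τ̲ − 1))·Ψ(δ). -/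
open Set

/-- Stability of the `J`-difference under the Hofmann–Mathé lower bound
(Lemma 5.1 of the paper): if `(1/4)·((τ̲² − 1)/(τ̲² + 1))·δ² ≤ α·Ψ((τ̲ − 1)·δ)` then
`J(φ_α^δ) − J(φ†) ≤ 2·((τ̲² + 1)/(τ̲ − 1))·Ψ(δ)`. -/
theorem J_difference_stability_HofmannMathe
    {V H : Type*} [NormedAddCommGroup V] [NormedSpace ℝ V] [CompleteSpace V]
    [NormedAddCommGroup H] [InnerProductSpace ℝ H] [CompleteSpace H]
    (T : V →L[ℝ] H) (J : V → ℝ) (hJ : ConvexOn ℝ Set.univ J)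
    (φdag φα : V) (fδ : H) (δ α τl : ℝ)
    (hδ : 0 < δ) (hα : 0 < α) (hτl : 1 < τl)
    (hnoise : ‖T φdag - fδ‖ ≤ δ)
    (Ψ : ℝ → ℝ)
    (hΨcont : ContinuousOn Ψ (Ici (0 : ℝ)))
    (hΨmono : MonotoneOn Ψ (Ici (0 : ℝ)))
    (hΨ0 : Ψ 0 = 0)
    (hΨnonneg : ∀ t ∈ Ici (0 : ℝ), 0 ≤ Ψ t)
    (hΨconc : ConcaveOn ℝ (Ici (0 : ℝ)) Ψ)
    (hmin : ∀ φ : V, (1 / 2) * ‖T φα - fδ‖ ^ 2 + α * J φα ≤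
      (1 / 2) * ‖T φ - fδ‖ ^ 2 + α * J φ)
    (hlow : (1 / 4) * ((τl ^ 2 - 1) / (τl ^ 2 + 1)) * δ ^ 2 ≤ α * Ψ ((τl - 1) * δ)) :
    J φα - J φdag ≤ 2 * ((τl ^ 2 + 1) / (τl - 1)) * Ψ δ := by
  have hc3 : (0 : ℝ) < τl - 1 := by linarith
  have hc1 : (0 : ℝ) < τl ^ 2 + 1 := by positivity
  have hΨδ : 0 ≤ Ψ δ := hΨnonneg δ (le_of_lt hδ)
  -- Step 1: minimality at φdag
  have h1 : α * J φα - α * J φdag ≤ δ ^ 2 / 2 := by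
    have hm := hmin φdag
    have hsq : ‖T φdag - fδ‖ ^ 2 ≤ δ ^ 2 := by
      nlinarith [norm_nonneg (T φdag - fδ)]
    nlinarith [sq_nonneg ‖T φα - fδ‖]
  -- Step 2: Ψ ((τl - 1) * δ) ≤ (τl + 1) * Ψ δ
  have h2 : Ψ ((τl - 1) * δ) ≤ (τl + 1) * Ψ δ := by
    rcases le_or_gt τl 2 with h | h
    · have hmem : (τl - 1) * δ ∈ Ici (0 : ℝ) := by
        have : 0 ≤ (τl - 1) * δ := by positivity
        simpa using this
      have := hΨmono hmem (le_of_lt hδ) (by nlinarith)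
      nlinarith
    · -- sublinearity from concavity: Ψ δ ≥ Ψ((τl-1)δ)/(τl-1)
      have ha : (0 : ℝ) ≤ 1 / (τl - 1) := by positivity
      have hb : (0 : ℝ) ≤ 1 - 1 / (τl - 1) := by
        have : 1 / (τl - 1) ≤ 1 := by
          rw [div_le_one hc3]; linarith
        linarith
      have hmem : (τl - 1) * δ ∈ Ici (0 : ℝ) := by
        have : 0 ≤ (τl - 1) * δ := by positivity
        simpa using this
      have h0mem : (0 : ℝ) ∈ Ici (0 : ℝ) := self_mem_Ici
      have hab : 1 / (τl - 1) + (1 - 1 / (τl - 1)) = 1 := by ring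
      have hconc := hΨconc.2 hmem h0mem ha hb hab
      have harg : (1 / (τl - 1)) • ((τl - 1) * δ) + (1 - 1 / (τl - 1)) • (0 : ℝ) = δ := by
        simp only [smul_eq_mul, mul_zero, add_zero]
        field_simp
      rw [harg, hΨ0] at hconc
      have hconc' : Ψ ((τl - 1) * δ) / (τl - 1) ≤ Ψ δ := by
        have : (1 / (τl - 1)) * Ψ ((τl - 1) * δ) ≤ Ψ δ := by simpa using hconc
        rw [div_eq_inv_mul, ← one_div]
        exact this
      have hX := (div_le_iff₀ hc3).mp hconc'
      nlinarith
  -- Step 3: combine with lower bound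
  have h3 : (τl ^ 2 - 1) * δ ^ 2 ≤ 4 * (α * ((τl + 1) * Ψ δ)) * (τl ^ 2 + 1) := by
    have hchain : α * Ψ ((τl - 1) * δ) ≤ α * ((τl + 1) * Ψ δ) :=
      mul_le_mul_of_nonneg_left h2 (le_of_lt hα)
    have hlow' : (1 / 4) * ((τl ^ 2 - 1) / (τl ^ 2 + 1)) * δ ^ 2 ≤ α * ((τl + 1) * Ψ δ) :=
      le_trans hlow hchain
    have hdiv : ((τl ^ 2 - 1) * δ ^ 2) / (τl ^ 2 + 1) ≤ 4 * (α * ((τl + 1) * Ψ δ)) := by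
      rw [div_le_iff₀ hc1]
      have hm := mul_le_mul_of_nonneg_right hlow' (le_of_lt hc1)
      have heq : 1 / 4 * ((τl ^ 2 - 1) / (τl ^ 2 + 1)) * δ ^ 2 * (τl ^ 2 + 1)
          = 1 / 4 * (τl ^ 2 - 1) * δ ^ 2 := by
        field_simp
      rw [heq] at hm
      linarith
    calc (τl ^ 2 - 1) * δ ^ 2 = ((τl ^ 2 - 1) * δ ^ 2) / (τl ^ 2 + 1) * (τl ^ 2 + 1) := by
          field_simp
      _ ≤ 4 * (α * ((τl + 1) * Ψ δ)) * (τl ^ 2 + 1) :=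
          mul_le_mul_of_nonneg_right hdiv (le_of_lt hc1)
  -- finish: multiply goal by α (τl - 1) > 0
  rw [show 2 * ((τl ^ 2 + 1) / (τl - 1)) * Ψ δ = (2 * (τl ^ 2 + 1) * Ψ δ) / (τl - 1) by ring,
    le_div_iff₀ hc3]
  have hfactor : τl ^ 2 - 1 = (τl - 1) * (τl + 1) := by ring
  -- from h3: (τl-1)(τl+1) δ² ≤ 4 c1 α (τl+1) Ψδ ⇒ (τl-1) δ² ≤ 4 c1 α Ψδ
  have h4 : (τl - 1) * δ ^ 2 ≤ 4 * (τl ^ 2 + 1) * α * Ψ δ := by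
    have hτp : (0 : ℝ) < τl + 1 := by linarith
    nlinarith
  -- goal : (J φα - J φdag) * (τl - 1) ≤ 2 (τl²+1) Ψδ
  have := mul_le_mul_of_nonneg_left h1 (le_of_lt hc3)
  -- α (τl-1)(Jφα - Jφdag) ≤ (τl-1) δ²/2 ≤ 2 c1 α Ψδ
  have hkey : α * ((J φα - J φdag) * (τl - 1)) ≤ α * (2 * (τl ^ 2 + 1) * Ψ δ) := by
    nlinarith
  exact le_of_mul_le_mul_left hkey hα
end

section
/- (Stability of the J-difference under the new lower bound.) Assume δ > 0, σ ∈ (0,1], τ̲ > 1, ‖f† − f^δ‖_H ≤ δ, φ_α^δ minimizes F_α over V with α > 0, and the regularization parameter satisfies the lower bound (σ/4)·(τ̲ − 1)·δ² ≤ α·Ψ(δ), where Ψ is an index function. Then J(φ_α^δ) − J(φ†) ≤ (2/(σ·(τ̲ − 1)))·Ψ(δ). -/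
open Set

/-- Stability of the `J`-difference under the new lower bound (Lemma 5.2 of the paper):
if `(σ/4)·(τ̲ − 1)·δ² ≤ α·Ψ(δ)` then `J(φ_α^δ) − J(φ†) ≤ (2/(σ·(τ̲ − 1)))·Ψ(δ)`. -/
theorem J_difference_stability_new_bound
    {V H : Type*} [NormedAddCommGroup V] [NormedSpace ℝ V] [CompleteSpace V]
    [NormedAddCommGroup H] [InnerProductSpace ℝ H] [CompleteSpace H]
    (T : V →L[ℝ] H) (J : V → ℝ) (hJ : ConvexOn ℝ Set.univ J)
    (φdag φα : V) (fδ : H) (δ σ α τl : ℝ)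
    (hδ : 0 < δ) (hσ0 : 0 < σ) (hσ1 : σ ≤ 1) (hα : 0 < α) (hτl : 1 < τl)
    (hnoise : ‖T φdag - fδ‖ ≤ δ)
    (Ψ : ℝ → ℝ)
    (hΨcont : ContinuousOn Ψ (Ici (0 : ℝ)))
    (hΨmono : MonotoneOn Ψ (Ici (0 : ℝ)))
    (hΨ0 : Ψ 0 = 0)
    (hΨnonneg : ∀ t ∈ Ici (0 : ℝ), 0 ≤ Ψ t)
    (hmin : ∀ φ : V, (1 / 2) * ‖T φα - fδ‖ ^ 2 + α * J φα ≤
      (1 / 2) * ‖T φ - fδ‖ ^ 2 + α * J φ)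
    (hlow : (σ / 4) * (τl - 1) * δ ^ 2 ≤ α * Ψ δ) :
    J φα - J φdag ≤ (2 / (σ * (τl - 1))) * Ψ δ := by
  have h1 := hmin φdag
  have h2 : (0:ℝ) ≤ ‖T φα - fδ‖ ^ 2 := by positivity
  have h3 : ‖T φdag - fδ‖ ^ 2 ≤ δ ^ 2 := by
    have := norm_nonneg (T φdag - fδ)
    nlinarith
  have hs : 0 < σ * (τl - 1) := by nlinarith
  rw [div_mul_eq_mul_div, le_div_iff₀ hs]
  nlinarith
end

section
/- (Bregman-distance rate for the regularized solution.) Assume δ > 0, σ ∈ (0,1], 1 < τ̲ ≤ τ̄ < ∞, ‖f† − f^δ‖_H ≤ δ, Ψ is a concave index function, the variational source condition holds with coefficient σ, index function Ψ and a subgradient p† of J at φ†, φ_α^δ minimizes F_α over V with α > 0, the discrepancy bound ‖Tφ_α^δ − f^δ‖_H ≤ τ̄·δ holds, and (σ/4)·(τ̲ − 1)·δ² ≤ α·Ψ(δ). Then (σ/2)·D_J(φ_α^δ, φ†) ≤ ( 2/(σ·(τ̲ − 1)) + (τ̄ + 1) )·Ψ(δ), where D_J(φ_α^δ, φ†) :=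 J(φ_α^δ) − J(φ†) − ⟨p†, φ_α^δ − φ†⟩. -/
open Set

/-- Bregman-distance rate for the regularized solution (Theorem 5.3 of the paper):
under the VSC, the upper discrepancy bound and the new lower bound for `α`, one has
`(σ/2)·D_J(φ_α^δ, φ†) ≤ (2/(σ·(τ̲ − 1)) + (τ̄ + 1))·Ψ(δ)`. -/
theorem bregman_distance_rate
    {V H : Type*} [NormedAddCommGroup V] [NormedSpace ℝ V] [CompleteSpace V]
    [NormedAddCommGroup H] [InnerProductSpace ℝ H] [CompleteSpace H]
    (T : V →L[ℝ] H) (J : V → ℝ) (hJ : ConvexOn ℝ Set.univ J)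
    (φdag φα : V) (fδ : H) (δ σ α τl τu : ℝ)
    (hδ : 0 < δ) (hσ0 : 0 < σ) (hσ1 : σ ≤ 1) (hα : 0 < α)
    (hτl : 1 < τl) (hτlu : τl ≤ τu)
    (hnoise : ‖T φdag - fδ‖ ≤ δ)
    (Ψ : ℝ → ℝ)
    (hΨcont : ContinuousOn Ψ (Ici (0 : ℝ)))
    (hΨmono : MonotoneOn Ψ (Ici (0 : ℝ)))
    (hΨ0 : Ψ 0 = 0)
    (hΨnonneg : ∀ t ∈ Ici (0 : ℝ), 0 ≤ Ψ t)
    (hΨconc : ConcaveOn ℝ (Ici (0 : ℝ)) Ψ)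
    (pdag : V →L[ℝ] ℝ)
    (hpdag : ∀ v : V, pdag (v - φdag) ≤ J v - J φdag)
    (hVSC : ∀ φ : V, (σ / 2) * (J φ - J φdag - pdag (φ - φdag)) ≤
      J φ - J φdag + Ψ ‖T φ - T φdag‖)
    (hmin : ∀ φ : V, (1 / 2) * ‖T φα - fδ‖ ^ 2 + α * J φα ≤
      (1 / 2) * ‖T φ - fδ‖ ^ 2 + α * J φ)
    (hdisc_up : ‖T φα - fδ‖ ≤ τu * δ)
    (hlow : (σ / 4) * (τl - 1) * δ ^ 2 ≤ α * Ψ δ) :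
    (σ / 2) * (J φα - J φdag - pdag (φα - φdag)) ≤
      (2 / (σ * (τl - 1)) + (τu + 1)) * Ψ δ := by

  have hτu : 1 < τu := lt_of_lt_of_le hτl hτlu
  have hk : 0 < σ * (τl - 1) := by nlinarith
  -- Step 1: α (J φα - J φ†) ≤ δ²/2
  have h2 : ‖T φdag - fδ‖ ^ 2 ≤ δ ^ 2 := by
    have := norm_nonneg (T φdag - fδ); nlinarith
  have hJbound : α * (J φα - J φdag) ≤ δ ^ 2 / 2 := by
    have h1 := hmin φdag
    nlinarith [sq_nonneg ‖T φα - fδ‖]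
  -- Ψ δ > 0
  have hΨδ : 0 < Ψ δ := by
    rcases lt_or_ge 0 (Ψ δ) with h | h
    · exact h
    · exfalso
      have h1 : α * Ψ δ ≤ 0 := mul_nonpos_of_nonneg_of_nonpos (le_of_lt hα) h
      have h2 : 0 < δ ^ 2 := pow_pos hδ 2
      nlinarith
  -- norm bound
  have hnrm : ‖T φα - T φdag‖ ≤ (τu + 1) * δ := by
    calc ‖T φα - T φdag‖ ≤ ‖T φα - fδ‖ + ‖fδ - T φdag‖ :=
          norm_sub_le_norm_sub_add_norm_sub _ _ _
      _ ≤ τu * δ + δ := by rw [norm_sub_rev fδ (T φdag)]; linarith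
      _ = (τu + 1) * δ := by ring
  -- concavity: Ψ((τu+1)δ) ≤ (τu+1) Ψ δ
  have hc : (0:ℝ) < τu + 1 := by linarith
  have hsub : Ψ ((τu + 1) * δ) ≤ (τu + 1) * Ψ δ := by
    have hmem1 : (τu + 1) * δ ∈ Ici (0:ℝ) := le_of_lt (by positivity : (0:ℝ) < (τu + 1) * δ)
    have hmem0 : (0:ℝ) ∈ Ici (0:ℝ) := mem_Ici.mpr le_rfl
    have ha : (0:ℝ) ≤ 1 / (τu + 1) := by positivity
    have hb : (0:ℝ) ≤ 1 - 1 / (τu + 1) := by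
      have : 1 / (τu + 1) ≤ 1 := by
        rw [div_le_one hc]; linarith
      linarith
    have hab : 1 / (τu + 1) + (1 - 1 / (τu + 1)) = 1 := by ring
    have hcon := hΨconc.2 hmem1 hmem0 ha hb hab
    simp only [smul_eq_mul, mul_zero, add_zero, hΨ0] at hcon
    have heq : 1 / (τu + 1) * ((τu + 1) * δ) = δ := by
      field_simp
    rw [heq] at hcon
    have : 1 / (τu + 1) * Ψ ((τu + 1) * δ) ≤ Ψ δ := by linarith
    calc Ψ ((τu + 1) * δ) = (τu + 1) * (1 / (τu + 1) * Ψ ((τu + 1) * δ)) := by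
          field_simp
      _ ≤ (τu + 1) * Ψ δ := by
          exact mul_le_mul_of_nonneg_left this (le_of_lt hc)
  have hΨn : Ψ ‖T φα - T φdag‖ ≤ (τu + 1) * Ψ δ :=
    le_trans (hΨmono (norm_nonneg _) (le_of_lt (by positivity : (0:ℝ) < (τu + 1) * δ)) hnrm) hsub
  -- J φα - J φ† ≤ 2/(σ(τl-1)) Ψδ
  have hmul : σ * (τl - 1) * (J φα - J φdag) ≤ 2 * Ψ δ := by
    nlinarith [hJbound, hlow]
  have hA : J φα - J φdag ≤ 2 / (σ * (τl - 1)) * Ψ δ := by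
    rw [div_mul_eq_mul_div, le_div_iff₀ hk]
    nlinarith
  have hv := hVSC φα
  nlinarith
end

section
/- (Reverse Bregman-distance rate.) Assume δ > 0, σ ∈ (0,1], 1 < τ̲ ≤ τ̄ < ∞, ‖f† − f^δ‖_H ≤ δ, Ψ is a concave index function, the variational source condition holds with coefficient σ, index function Ψ and a subgradient p† of J at φ†, the discrepancy bound ‖Tφ_α^δ − f^δ‖_H ≤ τ̄·δ holds, (σ/4)·(τ̲ − 1)·δ² ≤ α·Ψ(δ) with α > 0, and the functional p ∈ V* given by ⟨p, h⟩ := (1/α)·⟪f^δ − Tφ_α^δ, T h⟫_H is a subgradient of J at φ_α^δ (first-order optimality). Then D_J(φ†, φ_α^δ) ≤ ( (τ̄ + 1) + 4·τ̄·(τ̄ + 1)/(σ·(τ̲ − 1)) )·Ψ(δ), where D_J(φ†, φ_α^δ) := J(φ†) − J(φ_α^δ) − ⟨p, φ† − φ_α^δ⟩. -/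
open Set RealInnerProductSpace

/-- Reverse Bregman-distance rate (Theorem 5.4 of the paper): under the VSC, the upper
discrepancy bound, the new lower bound for `α`, and first-order optimality (the functional
`⟨p, h⟩ = (1/α)·⟪f^δ − Tφ_α^δ, T h⟫` is a subgradient of `J` at `φ_α^δ`), one has
`D_J(φ†, φ_α^δ) ≤ ((τ̄ + 1) + 4·τ̄·(τ̄ + 1)/(σ·(τ̲ − 1)))·Ψ(δ)`. -/
theorem reverse_bregman_distance_rate
    {V H : Type*} [NormedAddCommGroup V] [NormedSpace ℝ V] [CompleteSpace V]
    [NormedAddCommGroup H] [InnerProductSpace ℝ H] [CompleteSpace H]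
    (T : V →L[ℝ] H) (J : V → ℝ) (hJ : ConvexOn ℝ Set.univ J)
    (φdag φα : V) (fδ : H) (δ σ α τl τu : ℝ)
    (hδ : 0 < δ) (hσ0 : 0 < σ) (hσ1 : σ ≤ 1) (hα : 0 < α)
    (hτl : 1 < τl) (hτlu : τl ≤ τu)
    (hnoise : ‖T φdag - fδ‖ ≤ δ)
    (Ψ : ℝ → ℝ)
    (hΨcont : ContinuousOn Ψ (Ici (0 : ℝ)))
    (hΨmono : MonotoneOn Ψ (Ici (0 : ℝ)))
    (hΨ0 : Ψ 0 = 0)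
    (hΨnonneg : ∀ t ∈ Ici (0 : ℝ), 0 ≤ Ψ t)
    (hΨconc : ConcaveOn ℝ (Ici (0 : ℝ)) Ψ)
    (pdag : V →L[ℝ] ℝ)
    (hpdag : ∀ v : V, pdag (v - φdag) ≤ J v - J φdag)
    (hVSC : ∀ φ : V, (σ / 2) * (J φ - J φdag - pdag (φ - φdag)) ≤
      J φ - J φdag + Ψ ‖T φ - T φdag‖)
    (hdisc_up : ‖T φα - fδ‖ ≤ τu * δ)
    (hlow : (σ / 4) * (τl - 1) * δ ^ 2 ≤ α * Ψ δ)
    (p : V →L[ℝ] ℝ)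
    (hp : ∀ h : V, p h = (1 / α) * ⟪fδ - T φα, T h⟫)
    (hp_subgrad : ∀ v : V, p (v - φα) ≤ J v - J φα) :
    J φdag - J φα - p (φdag - φα) ≤
      ((τu + 1) + 4 * τu * (τu + 1) / (σ * (τl - 1))) * Ψ δ := by
  have hΨd : 0 ≤ Ψ δ := hΨnonneg δ hδ.le
  have hτu1 : (1:ℝ) < τu + 1 := by linarith
  have he : ‖T φα - T φdag‖ ≤ (τu + 1) * δ := by
    have : T φα - T φdag = (T φα - fδ) + (fδ - T φdag) := by abel
    rw [this]
    have h2 : ‖fδ - T φdag‖ ≤ δ := by rwa [norm_sub_rev]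
    calc ‖(T φα - fδ) + (fδ - T φdag)‖ ≤ ‖T φα - fδ‖ + ‖fδ - T φdag‖ := norm_add_le _ _
      _ ≤ τu * δ + δ := add_le_add hdisc_up h2
      _ = (τu + 1) * δ := by ring
  -- concavity: Ψ((τu+1)δ) ≤ (τu+1) Ψ δ
  have hkey : Ψ ((τu + 1) * δ) ≤ (τu + 1) * Ψ δ := by
    have hc : (0:ℝ) < τu + 1 := by linarith
    have ha : (0:ℝ) ≤ 1 / (τu + 1) := by positivity
    have hb : (0:ℝ) ≤ 1 - 1 / (τu + 1) := by
      have : 1 / (τu + 1) ≤ 1 := by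
        rw [div_le_one hc]; linarith
      linarith
    have hx : (τu + 1) * δ ∈ Ici (0:ℝ) := by
      have : 0 ≤ (τu + 1) * δ := by positivity
      simpa using this
    have h0 : (0:ℝ) ∈ Ici (0:ℝ) := mem_Ici.mpr le_rfl
    have := hΨconc.2 hx h0 ha hb (by ring)
    simp only [smul_eq_mul, mul_zero, hΨ0, add_zero] at this
    have hδeq : 1 / (τu + 1) * ((τu + 1) * δ) = δ := by field_simp
    rw [hδeq] at this
    have := mul_le_mul_of_nonneg_left this hc.le
    calc Ψ ((τu + 1) * δ) = (τu + 1) * (1 / (τu + 1) * Ψ ((τu + 1) * δ)) := by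
          field_simp
      _ ≤ (τu + 1) * Ψ δ := this
  have hmonoe : Ψ ‖T φα - T φdag‖ ≤ Ψ ((τu + 1) * δ) := by
    apply hΨmono (by simp [norm_nonneg]) (by simp; positivity) he
  -- Step A: J φdag - J φα ≤ (τu+1) Ψ δ
  have hBreg : 0 ≤ J φα - J φdag - pdag (φα - φdag) := by
    have := hpdag φα; linarith
  have hA : J φdag - J φα ≤ (τu + 1) * Ψ δ := by
    have h1 := hVSC φα
    have h2 : 0 ≤ (σ / 2) * (J φα - J φdag - pdag (φα - φdag)) := mul_nonneg (by positivity) hBreg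
    have : 0 ≤ J φα - J φdag + Ψ ‖T φα - T φdag‖ := le_trans h2 h1
    nlinarith [hmonoe, hkey]
  -- Step B: bound -p(φdag - φα)
  have hB : -p (φdag - φα) ≤ 4 * τu * (τu + 1) / (σ * (τl - 1)) * Ψ δ := by
    rw [hp]
    have hTsub : T (φdag - φα) = T φdag - T φα := map_sub T _ _
    rw [hTsub]
    have hinner : ⟪fδ - T φα, -(T φdag - T φα)⟫ ≤ ‖fδ - T φα‖ * ‖T φα - T φdag‖ := by
      have := real_inner_le_norm (fδ - T φα) (T φα - T φdag)
      have hnn : -(T φdag - T φα) = T φα - T φdag := by abel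
      rw [hnn]; exact this
    have hnorm1 : ‖fδ - T φα‖ ≤ τu * δ := by rwa [norm_sub_rev]
    have hprod : ‖fδ - T φα‖ * ‖T φα - T φdag‖ ≤ (τu * δ) * ((τu + 1) * δ) :=
      mul_le_mul hnorm1 he (norm_nonneg _) (by nlinarith)
    have hneg : -(1 / α * ⟪fδ - T φα, T φdag - T φα⟫)
        = 1 / α * ⟪fδ - T φα, -(T φdag - T φα)⟫ := by
      rw [inner_neg_right]; ring
    rw [hneg]
    have hstep : 1 / α * ⟪fδ - T φα, -(T φdag - T φα)⟫ ≤ 1 / α * ((τu * δ) * ((τu + 1) * δ)) := by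
      apply mul_le_mul_of_nonneg_left _ (by positivity)
      exact le_trans hinner hprod
    refine le_trans hstep ?_
    -- use hlow : (σ/4)(τl-1)δ² ≤ α Ψ δ, i.e. δ²/α ≤ 4Ψδ/(σ(τl-1))
    have hστ : 0 < σ * (τl - 1) := by
      apply mul_pos hσ0; linarith
    have hδ2 : δ ^ 2 / α ≤ 4 * Ψ δ / (σ * (τl - 1)) := by
      rw [div_le_div_iff₀ hα hστ]
      nlinarith [hlow]
    have hτu0 : 0 < τu := by linarith
    calc 1 / α * ((τu * δ) * ((τu + 1) * δ)) = (τu * (τu + 1)) * (δ ^ 2 / α) := by ring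
      _ ≤ (τu * (τu + 1)) * (4 * Ψ δ / (σ * (τl - 1))) := by
          apply mul_le_mul_of_nonneg_left hδ2 (by positivity)
      _ = 4 * τu * (τu + 1) / (σ * (τl - 1)) * Ψ δ := by ring
  linarith [hA, hB]
end

section
/- (Symmetric Bregman-distance rate.) Assume δ > 0, σ ∈ (0,1], 1 < τ̲ ≤ τ̄ < ∞, ‖f† − f^δ‖_H ≤ δ, Ψ is a concave index function, the variational source condition holds with coefficient σ, index function Ψ and a subgradient p† of J at φ†, φ_α^δ minimizes F_α over V with α > 0, the discrepancy bound ‖Tφ_α^δ − f^δ‖_H ≤ τ̄·δ holds, (σ/4)·(τ̲ − 1)·δ² ≤ α·Ψ(δ), and the functional p ∈ V* given by ⟨p, h⟩ := (1/α)·⟪f^δ − Tφ_α^δ, T h⟫_H is a subgradient of J at φ_α^δ. Then the symmetric Bregman distance satisfies D_J^sym(φ_α^δ, φ†) := D_J(φ_α^δ, φ†) + D_J(φ†, φ_α^δ) ≤ [ (2/σ)·( 2/(σ·(τ̲ − 1)) + (τ̄ + 1) ) + (τ̄ + 1) + 4·τ̄·(τ̄ + 1)/(σ·(τ̲ − 1))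 ]·Ψ(δ), where D_J(φ_α^δ, φ†) is taken with the subgradient p† and D_J(φ†, φ_α^δ) with the subgradient p. -/
open Set RealInnerProductSpace

set_option maxHeartbeats 1600000 in
/-- Symmetric Bregman-distance rate (Corollary 5.5 of the paper): under the VSC, the upper
discrepancy bound, the new lower bound for `α`, minimality of `φ_α^δ`, and first-order
optimality, the symmetric Bregman distance
`D_J^sym(φ_α^δ, φ†) = D_J(φ_α^δ, φ†) + D_J(φ†, φ_α^δ)` (the first taken with the
subgradient `p†` of `J` at `φ†`, the second with the subgradient `p` of `J` at `φ_α^δ`)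
is bounded by `((2/σ)·(2/(σ·(τ̲ − 1)) + (τ̄ + 1)) + (τ̄ + 1) + 4·τ̄·(τ̄ + 1)/(σ·(τ̲ − 1)))·Ψ(δ)`. -/
theorem symmetric_bregman_distance_rate
    {V H : Type*} [NormedAddCommGroup V] [NormedSpace ℝ V] [CompleteSpace V]
    [NormedAddCommGroup H] [InnerProductSpace ℝ H] [CompleteSpace H]
    (T : V →L[ℝ] H) (J : V → ℝ) (hJ : ConvexOn ℝ Set.univ J)
    (φdag φα : V) (fδ : H) (δ σ α τl τu : ℝ)
    (hδ : 0 < δ) (hσ0 : 0 < σ) (hσ1 : σ ≤ 1) (hα : 0 < α)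
    (hτl : 1 < τl) (hτlu : τl ≤ τu)
    (hnoise : ‖T φdag - fδ‖ ≤ δ)
    (Ψ : ℝ → ℝ)
    (hΨcont : ContinuousOn Ψ (Ici (0 : ℝ)))
    (hΨmono : MonotoneOn Ψ (Ici (0 : ℝ)))
    (hΨ0 : Ψ 0 = 0)
    (hΨnonneg : ∀ t ∈ Ici (0 : ℝ), 0 ≤ Ψ t)
    (hΨconc : ConcaveOn ℝ (Ici (0 : ℝ)) Ψ)
    (pdag : V →L[ℝ] ℝ)
    (hpdag : ∀ v : V, pdag (v - φdag) ≤ J v - J φdag)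
    (hVSC : ∀ φ : V, (σ / 2) * (J φ - J φdag - pdag (φ - φdag)) ≤
      J φ - J φdag + Ψ ‖T φ - T φdag‖)
    (hmin : ∀ φ : V, (1 / 2) * ‖T φα - fδ‖ ^ 2 + α * J φα ≤
      (1 / 2) * ‖T φ - fδ‖ ^ 2 + α * J φ)
    (hdisc_up : ‖T φα - fδ‖ ≤ τu * δ)
    (hlow : (σ / 4) * (τl - 1) * δ ^ 2 ≤ α * Ψ δ)
    (p : V →L[ℝ] ℝ)
    (hp : ∀ h : V, p h = (1 / α) * ⟪fδ - T φα, T h⟫)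
    (hp_subgrad : ∀ v : V, p (v - φα) ≤ J v - J φα) :
    (J φα - J φdag - pdag (φα - φdag)) + (J φdag - J φα - p (φdag - φα)) ≤
      ((2 / σ) * (2 / (σ * (τl - 1)) + (τu + 1)) + (τu + 1) +
        4 * τu * (τu + 1) / (σ * (τl - 1))) * Ψ δ := by

  have hτu1 : 1 < τu := lt_of_lt_of_le hτl hτlu
  have hΨδ : 0 ≤ Ψ δ := hΨnonneg δ hδ.le
  set s := σ * (τl - 1) with hs
  have hspos : 0 < s := mul_pos hσ0 (by linarith)
  -- (i) minimality bound
  have hi : α * (J φα - J φdag) ≤ δ ^ 2 / 2 := by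
    have hm := hmin φdag
    have h1 : ‖T φdag - fδ‖ ^ 2 ≤ δ ^ 2 := by
      have := norm_nonneg (T φdag - fδ); nlinarith
    nlinarith [sq_nonneg ‖T φα - fδ‖]
  -- (ii) lower bound on α
  have hii : s * δ ^ 2 ≤ 4 * (α * Ψ δ) := by rw [hs]; nlinarith [hlow]
  clear_value s
  have hJd : s * (J φα - J φdag) ≤ 2 * Ψ δ := by
    have h3 : α * (s * (J φα - J φdag)) ≤ α * (2 * Ψ δ) := by nlinarith
    exact le_of_mul_le_mul_left h3 hα
  -- norm triangle bound
  have hTT : ‖T φα - T φdag‖ ≤ (τu + 1) * δ := by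
    have h1 : ‖T φα - T φdag‖ ≤ ‖T φα - fδ‖ + ‖T φdag - fδ‖ := by
      have h := norm_sub_le (T φα - fδ) (T φdag - fδ)
      simpa [sub_sub_sub_cancel_right] using h
    nlinarith
  -- concavity scaling
  have hc : (0:ℝ) < τu + 1 := by linarith
  have hscale : Ψ ((τu + 1) * δ) ≤ (τu + 1) * Ψ δ := by
    have hx : (τu + 1) * δ ∈ Ici (0:ℝ) := mem_Ici.mpr (by positivity)
    have ha : (0:ℝ) ≤ 1 / (τu + 1) := by positivity
    have hb : (0:ℝ) ≤ 1 - 1 / (τu + 1) := by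
      have : 1 / (τu + 1) ≤ 1 := by rw [div_le_one hc]; linarith
      linarith
    have hab : 1 / (τu + 1) + (1 - 1 / (τu + 1)) = 1 := by ring
    have h := hΨconc.2 hx (mem_Ici.mpr le_rfl) ha hb hab
    have harg : (1 / (τu + 1)) • ((τu + 1) * δ) + (1 - 1 / (τu + 1)) • (0:ℝ) = δ := by
      simp only [smul_eq_mul]; field_simp; ring
    rw [harg, smul_eq_mul, smul_eq_mul, hΨ0, mul_zero, add_zero] at h
    have h2 := mul_le_mul_of_nonneg_left h hc.le
    have hcc : (τu + 1) * (1 / (τu + 1)) = 1 := by field_simp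
    rw [← mul_assoc, hcc, one_mul] at h2
    exact h2
  have hΨchain : Ψ ‖T φα - T φdag‖ ≤ (τu + 1) * Ψ δ :=
    le_trans (hΨmono (mem_Ici.mpr (norm_nonneg _)) (mem_Ici.mpr (by positivity)) hTT) hscale
  -- VSC consequences
  have hD1nn : 0 ≤ J φα - J φdag - pdag (φα - φdag) := by have := hpdag φα; linarith
  have hVSCa := hVSC φα
  have hVSCb : σ * (J φα - J φdag - pdag (φα - φdag)) ≤
      2 * (J φα - J φdag) + 2 * (τu + 1) * Ψ δ := by linarith
  have hJd2 : J φdag - J φα ≤ (τu + 1) * Ψ δ := by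
    nlinarith [mul_nonneg hσ0.le hD1nn]
  -- σ s D1 bound
  have hD1 : σ * s * (J φα - J φdag - pdag (φα - φdag)) ≤
      (4 + 2 * s * (τu + 1)) * Ψ δ := by
    have e1 := mul_le_mul_of_nonneg_left hVSCb hspos.le
    ring_nf at e1 hJd ⊢
    linarith
  -- inner product bound
  have hpv : α * p (φdag - φα) = ⟪fδ - T φα, T φdag - T φα⟫ := by
    rw [hp (φdag - φα), map_sub]
    field_simp
  have hkey : ⟪fδ - T φα, T φdag - T φα⟫ =
      ⟪fδ - T φα, T φdag - fδ⟫ + ‖fδ - T φα‖ ^ 2 := by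
    rw [← real_inner_self_eq_norm_sq, ← inner_add_right]
    congr 1
    abel
  have hnorm1 : ‖fδ - T φα‖ ≤ τu * δ := by rw [norm_sub_rev]; exact hdisc_up
  have hcs : -(‖fδ - T φα‖ * ‖T φdag - fδ‖) ≤ ⟪fδ - T φα, T φdag - fδ⟫ := by
    have h1 := abs_real_inner_le_norm (fδ - T φα) (T φdag - fδ)
    have h2 := neg_abs_le ⟪fδ - T φα, T φdag - fδ⟫
    linarith
  have hpα : α * (-(p (φdag - φα))) ≤ τu * δ ^ 2 := by
    have h1 := norm_nonneg (T φdag - fδ)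
    have hmul : ‖fδ - T φα‖ * ‖T φdag - fδ‖ ≤ τu * δ * δ :=
      mul_le_mul hnorm1 hnoise h1 (mul_nonneg (by linarith) hδ.le)
    have hsq := sq_nonneg ‖fδ - T φα‖
    have he : α * (-(p (φdag - φα))) =
        -(⟪fδ - T φα, T φdag - fδ⟫ + ‖fδ - T φα‖ ^ 2) := by
      rw [← hkey, ← hpv]; ring
    rw [he]
    have heq : τu * δ * δ = τu * δ ^ 2 := by ring
    linarith [hcs, hmul, hsq]
  have hv : s * (-(p (φdag - φα))) ≤ 4 * τu * Ψ δ := by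
    have h3 : α * (s * (-(p (φdag - φα)))) ≤ α * (4 * τu * Ψ δ) := by
      have e1 := mul_le_mul_of_nonneg_left hpα hspos.le
      have e2 := mul_le_mul_of_nonneg_left hii (by linarith : (0:ℝ) ≤ τu)
      ring_nf at e1 e2 ⊢
      linarith
    exact le_of_mul_le_mul_left h3 hα
  -- combine
  have hσs : 0 < σ * s := mul_pos hσ0 hspos
  have hbig : σ * s * ((J φα - J φdag - pdag (φα - φdag)) +
      (J φdag - J φα - p (φdag - φα))) ≤
      σ * s * (((2 / σ) * (2 / s + (τu + 1)) + (τu + 1) +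
        4 * τu * (τu + 1) / s) * Ψ δ) := by
    have hC : σ * s * (((2 / σ) * (2 / s + (τu + 1)) + (τu + 1) +
        4 * τu * (τu + 1) / s) * Ψ δ) =
        (4 + 2 * s * (τu + 1) + σ * s * (τu + 1) + 4 * σ * τu * (τu + 1)) * Ψ δ := by
      field_simp
      ring
    rw [hC]
    have h4 : σ * s * (J φdag - J φα) ≤ σ * s * ((τu + 1) * Ψ δ) :=
      mul_le_mul_of_nonneg_left hJd2 hσs.le
    have h5 : σ * (s * (-(p (φdag - φα)))) ≤ σ * (4 * τu * Ψ δ) :=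
      mul_le_mul_of_nonneg_left hv hσ0.le
    have h6 : σ * (4 * τu * Ψ δ) ≤ 4 * σ * τu * (τu + 1) * Ψ δ := by
      nlinarith [mul_nonneg (mul_nonneg hσ0.le (by linarith : (0:ℝ) ≤ τu)) hΨδ]
    ring_nf at hD1 h4 h5 h6 ⊢
    linarith
  exact le_of_mul_le_mul_left hbig hσs
end
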